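/- Let Y be a square-integrable real random variable with mean E[Y] = X and variance Var[Y] = a + bX + cX², let p ∈ (0,1], and let B be a Bernoulli(p) random variable independent of Y. Define the zero-inflated observation Ȳ = B·Y, and set X̄ = E[Ȳ] = p·X. Then Var[Ȳ] = a·p + b·p·X + p·(c + 1 − p)·X² = a·p + b·X̄ + ((c + 1 − p)/p)·X̄²; in particular, Ȳ again satisfies a quadratic relation between its mean and variance. -/

import Mathlib

open MeasureTheory ProbabilityTheory

/-- **Zero-inflation preserves the quadratic mean-variance relation.**
If `Y` is square-integrable with mean `X` and variance `a + bX + cX²`, `B` is a `Bernoulli(p)`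
variable independent of `Y` with `p ∈ (0,1]`, and `Ȳ = B·Y`, then `E[Ȳ] = pX` and
`Var[Ȳ] = ap + bpX + p(c + 1 − p)X²  = ap + b·X̄ + ((c + 1 − p)/p)·X̄²` where `X̄ = pX`. -/
theorem stmt9 {Ω : Type*} [MeasurableSpace Ω] (μ : Measure Ω) [IsProbabilityMeasure μ]
    (Y B : Ω → ℝ) (hY : MemLp Y 2 μ) (hYmeas : Measurable Y) (hBmeas : Measurable B)
    (a b c X p : ℝ) (hp : 0 < p) (hp1 : p ≤ 1)
    (hB01 : ∀ ω, B ω = 0 ∨ B ω = 1)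
    (hBlaw : μ {ω | B ω = 1} = ENNReal.ofReal p)
    (hindep : IndepFun B Y μ)
    (hmean : ∫ ω, Y ω ∂μ = X)
    (hvar : variance Y μ = a + b * X + c * X ^ 2) :
    (∫ ω, B ω * Y ω ∂μ = p * X) ∧
    variance (fun ω => B ω * Y ω) μ = a * p + b * p * X + p * (c + 1 - p) * X ^ 2 ∧
    variance (fun ω => B ω * Y ω) μ
      = a * p + b * (p * X) + ((c + 1 - p) / p) * (p * X) ^ 2 := by
  -- setup
  have hs : MeasurableSet {ω | B ω = 1} := hBmeas (measurableSet_singleton 1)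
  have hBind : B = Set.indicator {ω | B ω = 1} (fun _ => (1:ℝ)) := by
    funext ω
    rcases hB01 ω with h | h <;> simp [Set.indicator, h]
  have hBint : Integrable B μ := by
    rw [hBind]
    exact (integrable_const (1:ℝ)).indicator hs
  have hEB : ∫ ω, B ω ∂μ = p := by
    rw [show (fun ω => B ω) = B from rfl, hBind, integral_indicator_const _ hs, measureReal_def, hBlaw]
    simp [ENNReal.toReal_ofReal hp.le]
  have hBsq : ∀ ω, B ω ^ 2 = B ω := by
    intro ω; rcases hB01 ω with h | h <;> simp [h]
  have hYint : Integrable Y μ := hY.integrable (by norm_num)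
  have hY2int : Integrable (fun ω => Y ω ^ 2) μ := by
    simpa [sq] using hY.integrable_sq
  -- mean
  have hmeanBY : ∫ ω, B ω * Y ω ∂μ = p * X := by
    have h : ∫ ω, B ω * Y ω ∂μ = (∫ ω, B ω ∂μ) * ∫ ω, Y ω ∂μ :=
      hindep.integral_mul_eq_mul_integral hBint.aestronglyMeasurable hYint.aestronglyMeasurable
    rw [h, hEB, hmean]
  have hindep2 : IndepFun B (fun ω => Y ω ^ 2) μ :=
    hindep.comp measurable_id (measurable_id.pow_const 2)
  have hBY2 : MemLp (fun ω => B ω * Y ω) 2 μ := by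
    refine MemLp.of_le hY ((hBmeas.mul hYmeas).aestronglyMeasurable) ?_
    filter_upwards with ω
    rcases hB01 ω with h | h <;> simp [h, abs_nonneg]
  have hEY2 : ∫ ω, Y ω ^ 2 ∂μ = a + b * X + c * X ^ 2 + X ^ 2 := by
    have := variance_eq_sub hY
    rw [hvar, hmean] at this
    simp only [Pi.pow_apply] at this
    linarith
  have hvarBY : variance (fun ω => B ω * Y ω) μ
      = a * p + b * p * X + p * (c + 1 - p) * X ^ 2 := by
    rw [variance_eq_sub hBY2]
    have h1 : (fun ω => (B ω * Y ω) ^ 2) = fun ω => B ω * Y ω ^ 2 := by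
      funext ω; rw [mul_pow, hBsq]
    calc (∫ ω, (fun ω => B ω * Y ω) ω ^ 2 ∂μ) - (∫ ω, (fun ω => B ω * Y ω) ω ∂μ) ^ 2
        = (∫ ω, B ω * Y ω ^ 2 ∂μ) - (p * X) ^ 2 := by
          rw [hmeanBY]; congr 1; simp only []; rw [← h1]
      _ = p * (a + b * X + c * X ^ 2 + X ^ 2) - (p * X) ^ 2 := by
          have h : ∫ ω, B ω * Y ω ^ 2 ∂μ = (∫ ω, B ω ∂μ) * ∫ ω, Y ω ^ 2 ∂μ :=
            hindep2.integral_mul_eq_mul_integral hBint.aestronglyMeasurable hY2int.aestronglyMeasurable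
          rw [h, hEB, hEY2]
      _ = a * p + b * p * X + p * (c + 1 - p) * X ^ 2 := by ring
  refine ⟨hmeanBY, hvarBY, ?_⟩
  rw [hvarBY]
  field_simp
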